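/- For a convex optimization problem min f(x) s.t. g_i(x) ≤ 0, i=1,…,m, the number of support constraints (constraints whose removal strictly decreases the optimal value) is at most n, the dimension of the decision variable. -/
import Mathlib


/-- A feasible convex program in `ℝⁿ` with an optimal solution has at most `n`
support constraints, i.e. constraints whose removal strictly decreases the
optimal value (Hoffman 1979; Calafiore 2010, Lemma 2.2). -/
theorem support_constraints_card_le_dim {n m : ℕ}
    (f : (Fin n → ℝ) → ℝ) (g : Fin m → (Fin n → ℝ) → ℝ)
    (hf : ConvexOn ℝ Set.univ f) (hg : ∀ i, ConvexOn ℝ Set.univ (g i))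
    (xs : Fin n → ℝ)
    (hfeas : ∀ i, g i xs ≤ 0)
    (hopt : ∀ x, (∀ i, g i x ≤ 0) → f xs ≤ f x) :
    {i : Fin m | ∃ x, (∀ j, j ≠ i → g j x ≤ 0) ∧ f x < f xs}.ncard ≤ n := by
  set S := {i : Fin m | ∃ x, (∀ j, j ≠ i → g j x ≤ 0) ∧ f x < f xs} with hS
  by_contra hcard
  push_neg at hcard
  -- extract `n+1` support constraints
  obtain ⟨t, htS, htcard⟩ := Set.exists_subset_card_eq (Nat.succ_le_of_lt hcard)
  have htfin : t.Finite := Set.toFinite t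
  have htFinset : htfin.toFinset.card = n + 1 := by
    rw [← Set.ncard_eq_toFinset_card t htfin]; exact htcard
  set e' : Fin (n + 1) ≃o htfin.toFinset := htfin.toFinset.orderIsoOfFin htFinset
  set e : Fin (n + 1) → Fin m := fun k => (e' k : Fin m) with he
  have he_inj : Function.Injective e := by
    intro a b hab
    exact e'.injective (Subtype.ext hab)
  have heS : ∀ k, e k ∈ S := by
    intro k
    have : (e' k : Fin m) ∈ htfin.toFinset := (e' k).2
    rw [Set.Finite.mem_toFinset] at this; exact htS this
  -- witness points
  choose x hx hxf using fun k => heS k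
  -- the `n+2` points : xs and the witnesses
  set p : Option (Fin (n + 1)) → (Fin n → ℝ) := fun o => o.elim xs x with hp
  have hdep : ¬ AffineIndependent ℝ p := by
    intro hind
    have h1 := hind.card_le_finrank_succ
    have h2 : Module.finrank ℝ (vectorSpan ℝ (Set.range p)) ≤ n := by
      calc Module.finrank ℝ (vectorSpan ℝ (Set.range p))
          ≤ Module.finrank ℝ (Fin n → ℝ) := Submodule.finrank_le _
        _ = n := by simp
    have h3 : Fintype.card (Option (Fin (n + 1))) = n + 2 := by simp
    omega
  obtain ⟨I₀, z₀, hzI₀, hzIc₀⟩ := Convex.radon_partition hdep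
  have key : ∀ (I : Set (Option (Fin (n + 1)))) (z : Fin n → ℝ),
      z ∈ convexHull ℝ (p '' I) → z ∈ convexHull ℝ (p '' Iᶜ) → none ∉ I → False := ?_
  · by_cases hnone : none ∈ I₀
    · exact key I₀ᶜ z₀ hzIc₀ (by simpa using hzI₀) (by simpa using hnone)
    · exact key I₀ z₀ hzI₀ hzIc₀ hnone
  intro I z hzI hzIc hnone
  -- every point of `p '' I` is a witness point
  have hIwit : ∀ y ∈ p '' I, ∃ k, (some k ∈ I) ∧ y = x k := by
    rintro y ⟨o, hoI, rfl⟩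
    cases o with
    | none => exact absurd hoI hnone
    | some k => exact ⟨k, hoI, rfl⟩
  -- f z < f xs
  obtain ⟨y, hyI, hfy⟩ := hf.exists_ge_of_mem_convexHull (Set.subset_univ _) hzI
  obtain ⟨k₀, hk₀, rfl⟩ := hIwit y hyI
  have hfz : f z < f xs := lt_of_le_of_lt hfy (hxf k₀)
  -- z is feasible
  have hzfeas : ∀ l, g l z ≤ 0 := by
    intro l
    by_cases hl : ∃ k, some k ∈ I ∧ e k = l
    · -- use the representation over `Iᶜ`
      obtain ⟨k, hkI, rfl⟩ := hl
      obtain ⟨y, hyIc, hgy⟩ := (hg (e k)).exists_ge_of_mem_convexHull (Set.subset_univ _) hzIc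
      refine le_trans hgy ?_
      obtain ⟨o, hoIc, rfl⟩ := hyIc
      cases o with
      | none => exact hfeas (e k)
      | some k' =>
        have hkk' : k' ≠ k := by
          rintro rfl; exact hoIc hkI
        exact hx k' (e k) (fun h => hkk' (he_inj h).symm)
    · -- use the representation over `I`
      push_neg at hl
      obtain ⟨y, hyI, hgy⟩ := (hg l).exists_ge_of_mem_convexHull (Set.subset_univ _) hzI
      refine le_trans hgy ?_
      obtain ⟨k, hkI, rfl⟩ := hIwit y hyI
      exact hx k l (fun h => hl k hkI h.symm)
  exact absurd (hopt z hzfeas) (not_le.mpr hfz)
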